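/- Let K be a field, X ∈ Mat_n(K), I a finite index set, f_i ∈ K[x] monic irreducible polynomials and e_i positive integers (i ∈ I), and suppose that K^n, as a K[x]-module with x acting as X, is isomorphic to ⊕_{i∈I} K[x]/(f_i^{e_i}). Then the dimension of Cent(X) as a K-vector space equals Σ over all pairs (i,j) ∈ I×I with f_i = f_j of deg(f_i)·min(e_i, e_j). -/

import Mathlib

open scoped DirectSum

set_option synthInstance.maxHeartbeats 1000000
set_option maxHeartbeats 1000000

section Aux
open Polynomial
variable {K : Type*} [Field K]


noncomputable def quotHomEquiv (c d g k : K[X])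
    (hd : d ≠ 0) (hdk : d = g * k) (hgc : g ∣ c)
    (hkey : ∀ u : K[X], d ∣ c * u → k ∣ u) :
    ((K[X] ⧸ Ideal.span {c}) →ₗ[K[X]] (K[X] ⧸ Ideal.span {d})) ≃ₗ[K[X]]
      (K[X] ⧸ Ideal.span {g}) := by
  have hk : k ≠ 0 := fun h => hd (by simp [hdk, h])
  have hker0 : Ideal.span {c} ≤ LinearMap.ker
      (LinearMap.toSpanSingleton K[X] (K[X] ⧸ Ideal.span {d})
        (Submodule.Quotient.mk k)) := by
    intro x hx
    rw [Ideal.mem_span_singleton] at hx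
    obtain ⟨r, rfl⟩ := hx
    obtain ⟨c', hc'⟩ := hgc
    simp only [LinearMap.mem_ker, LinearMap.toSpanSingleton_apply]
    rw [← Submodule.Quotient.mk_smul, Submodule.Quotient.mk_eq_zero,
      Ideal.mem_span_singleton]
    exact ⟨c' * r, by rw [smul_eq_mul, hc', hdk]; ring⟩
  set Φ₀ : (K[X] ⧸ Ideal.span {c}) →ₗ[K[X]] (K[X] ⧸ Ideal.span {d}) :=
    Submodule.liftQ (Ideal.span {c})
      (LinearMap.toSpanSingleton K[X] _ (Submodule.Quotient.mk k)) hker0 with hΦ₀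
  have hΦ₀mk : ∀ r : K[X], Φ₀ (Submodule.Quotient.mk r) = Submodule.Quotient.mk (r * k) := by
    intro r
    rw [hΦ₀, Submodule.liftQ_apply, LinearMap.toSpanSingleton_apply,
      ← smul_eq_mul, Submodule.Quotient.mk_smul]
  set Ψ : K[X] →ₗ[K[X]] ((K[X] ⧸ Ideal.span {c}) →ₗ[K[X]] (K[X] ⧸ Ideal.span {d})) :=
    LinearMap.toSpanSingleton K[X] _ Φ₀ with hΨ
  have hker : LinearMap.ker Ψ = Ideal.span {g} := by
    ext r
    simp only [LinearMap.mem_ker, hΨ, LinearMap.toSpanSingleton_apply,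
      Ideal.mem_span_singleton]
    constructor
    · intro h
      have h1 := congrArg (fun φ => φ (Submodule.Quotient.mk 1)) h
      simp only [LinearMap.smul_apply, LinearMap.zero_apply] at h1
      rw [hΦ₀mk, one_mul, ← Submodule.Quotient.mk_smul, Submodule.Quotient.mk_eq_zero,
        Ideal.mem_span_singleton, smul_eq_mul] at h1
      have h2 : g * k ∣ r * k := hdk ▸ h1
      exact (mul_dvd_mul_iff_right hk).mp h2
    · rintro ⟨v, rfl⟩
      refine Submodule.linearMap_qext _ (LinearMap.ext fun x => ?_)
      show (g * v) • Φ₀ (Submodule.Quotient.mk x) = 0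
      rw [hΦ₀mk, ← Submodule.Quotient.mk_smul, Submodule.Quotient.mk_eq_zero,
        Ideal.mem_span_singleton, smul_eq_mul]
      exact ⟨v * x, by rw [hdk]; ring⟩
  have hsurj : Function.Surjective Ψ := by
    intro φ
    obtain ⟨u, hu⟩ := Submodule.Quotient.mk_surjective _ (φ (Submodule.Quotient.mk 1))
    have hcu : d ∣ c * u := by
      have hc0 : φ (Submodule.Quotient.mk c) = 0 := by
        have : (Submodule.Quotient.mk c : K[X] ⧸ Ideal.span {c}) = 0 := by
          rw [Submodule.Quotient.mk_eq_zero]; exact Ideal.mem_span_singleton_self c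
        rw [this, map_zero]
      have h2 : c • φ (Submodule.Quotient.mk 1) = 0 := by
        rw [← map_smul, ← hc0]
        congr 1
        rw [← Submodule.Quotient.mk_smul, smul_eq_mul, mul_one]
      rw [← hu, ← Submodule.Quotient.mk_smul, Submodule.Quotient.mk_eq_zero,
        Ideal.mem_span_singleton, smul_eq_mul] at h2
      exact h2
    obtain ⟨v, hv⟩ := hkey u hcu
    refine ⟨v, Submodule.linearMap_qext _ (LinearMap.ext fun x => ?_)⟩
    show v • Φ₀ (Submodule.Quotient.mk x) = φ (Submodule.Quotient.mk x)
    have hx : φ (Submodule.Quotient.mk x) = x • φ (Submodule.Quotient.mk 1) := by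
      rw [← map_smul]
      congr 1
      rw [← Submodule.Quotient.mk_smul, smul_eq_mul, mul_one]
    rw [hx, ← hu, hΦ₀mk, ← Submodule.Quotient.mk_smul, ← Submodule.Quotient.mk_smul,
      smul_eq_mul, smul_eq_mul, hv]
    congr 1
    ring
  exact ((Submodule.quotEquivOfEq _ _ hker.symm).trans
    (Ψ.quotKerEquivOfSurjective hsurj)).symm


lemma finrank_quot (g : K[X]) (hg : g ≠ 0) :
    Module.finrank K (K[X] ⧸ Ideal.span {g}) = g.natDegree := by
  have := (AdjoinRoot.powerBasis hg).finrank
  exact this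

theorem fd_quot (g : K[X]) (hg : g ≠ 0) :
    FiniteDimensional K (K[X] ⧸ Ideal.span {g}) :=
  (AdjoinRoot.powerBasis hg).finite



lemma coprime_of_ne (p q : K[X]) (hp : p.Monic) (hq : q.Monic)
    (hip : Irreducible p) (hiq : Irreducible q) (hne : p ≠ q) : IsCoprime p q := by
  refine isCoprime_of_irreducible_dvd (fun ⟨h0, _⟩ => hp.ne_zero h0) fun z hz hzp hzq => ?_
  exact hne (Polynomial.eq_of_monic_of_associated hp hq
    ((hz.associated_of_dvd hip hzp).symm.trans (hz.associated_of_dvd hiq hzq)))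

open scoped Classical in
noncomputable def homEquivPow (p q : K[X]) (a b : ℕ) (hp : p.Monic) (hq : q.Monic)
    (hip : Irreducible p) (hiq : Irreducible q) :
    ((K[X] ⧸ Ideal.span {p ^ a}) →ₗ[K[X]] (K[X] ⧸ Ideal.span {q ^ b})) ≃ₗ[K[X]]
      (K[X] ⧸ Ideal.span {if p = q then p ^ min a b else 1}) := by
  have hd : q ^ b ≠ 0 := pow_ne_zero _ hq.ne_zero
  by_cases hpq : p = q
  · subst hpq
    rw [if_pos rfl]
    refine quotHomEquiv _ _ _ (p ^ (b - min a b)) hd (by rw [← pow_add]; congr 1; omega)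
      (pow_dvd_pow _ (min_le_left a b)) fun u hu => ?_
    rcases le_or_gt b a with h | h
    · simpa [min_eq_right h] using one_dvd u
    · rw [min_eq_left h.le]
      have h2 : p ^ a * p ^ (b - a) ∣ p ^ a * u := by
        rwa [← pow_add, show a + (b - a) = b by omega]
      exact (mul_dvd_mul_iff_left (pow_ne_zero a hp.ne_zero)).mp h2
  · rw [if_neg hpq]
    refine quotHomEquiv _ _ _ (q ^ b) hd (one_mul _).symm (one_dvd _) fun u hu => ?_
    have hco : IsCoprime (q ^ b) (p ^ a) :=
      ((coprime_of_ne q p hq hp hiq hip (Ne.symm hpq)).pow)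
    exact hco.dvd_of_dvd_mul_left hu


noncomputable def centralizerEquivEnd (n : ℕ) (A : Matrix (Fin n) (Fin n) K) :
    (Subalgebra.centralizer K ({A} : Set (Matrix (Fin n) (Fin n) K))) ≃ₗ[K]
      Module.End K[X] (Module.AEval' A.mulVecLin) where
  toFun Y := LinearMap.ofAEval A.mulVecLin
      ((Module.AEval'.of A.mulVecLin).toLinearMap ∘ₗ (Y : Matrix (Fin n) (Fin n) K).mulVecLin)
      (fun m => by
        have hY : A * (Y : Matrix (Fin n) (Fin n) K) = (Y : Matrix (Fin n) (Fin n) K) * A :=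
          (Subalgebra.mem_centralizer_iff K).mp Y.2 A rfl
        have h := congrArg Matrix.mulVecLin hY
        rw [Matrix.mulVecLin_mul, Matrix.mulVecLin_mul] at h
        show Module.AEval'.of A.mulVecLin ((Y : Matrix (Fin n) (Fin n) K).mulVecLin
            (A.mulVecLin m)) =
          (X : K[X]) • (Module.AEval'.of A.mulVecLin
            ((Y : Matrix (Fin n) (Fin n) K).mulVecLin m))
        rw [Module.AEval'.X_smul_of]
        exact congrArg _ (LinearMap.congr_fun h.symm m))
  invFun ψ := ⟨LinearMap.toMatrix'
      ((Module.AEval'.of A.mulVecLin).symm.toLinearMap ∘ₗ (ψ.restrictScalars K) ∘ₗ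
        (Module.AEval'.of A.mulVecLin).toLinearMap), by
    rw [Subalgebra.mem_centralizer_iff]
    intro Z hZ
    rw [show Z = A from hZ]
    set g : (Fin n → K) →ₗ[K] (Fin n → K) :=
      (Module.AEval'.of A.mulVecLin).symm.toLinearMap ∘ₗ (ψ.restrictScalars K) ∘ₗ
        (Module.AEval'.of A.mulVecLin).toLinearMap with hg
    have key : A.mulVecLin ∘ₗ g = g ∘ₗ A.mulVecLin := by
      refine LinearMap.ext fun m => ?_
      show A.mulVecLin ((Module.AEval'.of A.mulVecLin).symm
          (ψ (Module.AEval'.of A.mulVecLin m))) =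
        (Module.AEval'.of A.mulVecLin).symm (ψ (Module.AEval'.of A.mulVecLin (A.mulVecLin m)))
      rw [← Module.AEval'.X_smul_of, map_smul, Module.AEval.of_symm_X_smul]
      rfl
    have h1 : A = LinearMap.toMatrix' A.mulVecLin := by
      rw [← Matrix.toLin'_apply', LinearMap.toMatrix'_toLin']
    calc A * LinearMap.toMatrix' g
        = LinearMap.toMatrix' A.mulVecLin * LinearMap.toMatrix' g := by rw [← h1]
      _ = LinearMap.toMatrix' (A.mulVecLin ∘ₗ g) := (LinearMap.toMatrix'_comp _ _).symm
      _ = LinearMap.toMatrix' (g ∘ₗ A.mulVecLin) := by rw [key]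
      _ = LinearMap.toMatrix' g * LinearMap.toMatrix' A.mulVecLin :=
          LinearMap.toMatrix'_comp _ _
      _ = LinearMap.toMatrix' g * A := by rw [← h1]⟩
  map_add' Y Z := by
    refine LinearMap.ext fun x => ?_
    show (Module.AEval'.of A.mulVecLin) (((Y : Matrix (Fin n) (Fin n) K) +
          (Z : Matrix (Fin n) (Fin n) K)).mulVecLin ((Module.AEval'.of A.mulVecLin).symm x)) =
      (Module.AEval'.of A.mulVecLin) ((Y : Matrix (Fin n) (Fin n) K).mulVecLin
          ((Module.AEval'.of A.mulVecLin).symm x)) +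
      (Module.AEval'.of A.mulVecLin) ((Z : Matrix (Fin n) (Fin n) K).mulVecLin
          ((Module.AEval'.of A.mulVecLin).symm x))
    rw [Matrix.mulVecLin_add, ← map_add]
    simp [Matrix.add_mulVec]
  map_smul' c Y := by
    refine LinearMap.ext fun x => ?_
    show (Module.AEval'.of A.mulVecLin) ((c • (Y : Matrix (Fin n) (Fin n) K)).mulVecLin
          ((Module.AEval'.of A.mulVecLin).symm x)) =
      c • (Module.AEval'.of A.mulVecLin) ((Y : Matrix (Fin n) (Fin n) K).mulVecLin
          ((Module.AEval'.of A.mulVecLin).symm x))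
    rw [← map_smul]
    congr 1
    simp [Matrix.mulVecLin_apply, Matrix.smul_mulVec]
  left_inv Y := by
    refine Subtype.ext ?_
    have h : LinearMap.toMatrix' (Y : Matrix (Fin n) (Fin n) K).mulVecLin =
        (Y : Matrix (Fin n) (Fin n) K) := by
      rw [← Matrix.toLin'_apply', LinearMap.toMatrix'_toLin']
    exact h
  right_inv ψ := by
    refine LinearMap.ext fun x => ?_
    have h : Matrix.mulVecLin (LinearMap.toMatrix'
        ((Module.AEval'.of A.mulVecLin).symm.toLinearMap ∘ₗ (ψ.restrictScalars K) ∘ₗ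
          (Module.AEval'.of A.mulVecLin).toLinearMap)) =
        ((Module.AEval'.of A.mulVecLin).symm.toLinearMap ∘ₗ (ψ.restrictScalars K) ∘ₗ
          (Module.AEval'.of A.mulVecLin).toLinearMap) := by
      rw [← Matrix.toLin'_apply', Matrix.toLin'_toMatrix']
    show (Module.AEval'.of A.mulVecLin) ((Matrix.mulVecLin (LinearMap.toMatrix'
        ((Module.AEval'.of A.mulVecLin).symm.toLinearMap ∘ₗ (ψ.restrictScalars K) ∘ₗ
          (Module.AEval'.of A.mulVecLin).toLinearMap)))
        ((Module.AEval'.of A.mulVecLin).symm x)) = ψ x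
    rw [h]
    rfl


section
variable {R : Type*} [CommRing R] (S : Type*) [CommRing S] [Algebra S R]
variable {ι : Type*} [Fintype ι] [DecidableEq ι]
variable (N : ι → Type*) [∀ i, AddCommGroup (N i)] [∀ i, Module R (N i)]
variable [∀ i, Module S (N i)] [∀ i, SMulCommClass R S (N i)] [∀ i, IsScalarTower S R (N i)]

/-- Hom into a finite product decomposes. -/
noncomputable def homPiEquiv (M : Type*) [AddCommGroup M] [Module R M] :
    (M →ₗ[R] (Π i, N i)) ≃ₗ[S] Π i, (M →ₗ[R] N i) where
  toFun φ i := LinearMap.proj i ∘ₗ φ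
  invFun g := LinearMap.pi g
  map_add' _ _ := rfl
  map_smul' _ _ := rfl
  left_inv φ := rfl
  right_inv g := rfl

noncomputable def homCongrRightS {M P P' : Type*} [AddCommGroup M] [Module R M]
    [AddCommGroup P] [Module R P] [Module S P] [IsScalarTower S R P]
    [AddCommGroup P'] [Module R P'] [Module S P'] [IsScalarTower S R P']
    (e : P ≃ₗ[R] P') : (M →ₗ[R] P) ≃ₗ[S] (M →ₗ[R] P') where
  toFun φ := e.toLinearMap ∘ₗ φ
  invFun φ := e.symm.toLinearMap ∘ₗ φ
  map_add' φ ψ := by ext x; simp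
  map_smul' s φ := by
    ext x
    show e ((s • φ) x) = s • e (φ x)
    rw [LinearMap.smul_apply, ← algebraMap_smul R s (φ x), map_smul, algebraMap_smul]
  left_inv φ := by ext x; simp
  right_inv φ := by ext x; simp

noncomputable def endCongrS {M P : Type*} [AddCommMonoid M] [Module R M]
    [Module S M] [IsScalarTower S R M]
    [AddCommMonoid P] [Module R P] [Module S P] [IsScalarTower S R P]
    (e : M ≃ₗ[R] P) : Module.End R M ≃ₗ[S] Module.End R P where
  toFun φ := e.toLinearMap ∘ₗ φ ∘ₗ e.symm.toLinearMap
  invFun ψ := e.symm.toLinearMap ∘ₗ ψ ∘ₗ e.toLinearMap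
  map_add' φ ψ := by ext x; simp
  map_smul' c φ := by
    ext x
    show e ((c • φ) (e.symm x)) = c • e (φ (e.symm x))
    rw [LinearMap.smul_apply, ← algebraMap_smul R c (φ (e.symm x)), map_smul, algebraMap_smul]
  left_inv φ := by ext x; simp
  right_inv ψ := by ext x; simp

noncomputable def endDirectSumEquiv :
    Module.End R (⨁ i, N i) ≃ₗ[S] Π i, Π j, (N i →ₗ[R] N j) := by
  refine ((DFinsupp.lsum S).symm ≪≫ₗ ?_)
  refine LinearEquiv.piCongrRight fun i => ?_
  refine ?_ ≪≫ₗ homPiEquiv S N (N i)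
  exact homCongrRightS S (DirectSum.linearEquivFunOnFintype R ι N)
end

open scoped Classical in
open Polynomial in
lemma finrank_homQuot {K : Type*} [Field K] (p q : K[X]) (a b : ℕ) (hp : p.Monic) (hq : q.Monic)
    (hip : Irreducible p) (hiq : Irreducible q) :
    Module.finrank K ((K[X] ⧸ Ideal.span {p ^ a}) →ₗ[K[X]] (K[X] ⧸ Ideal.span {q ^ b})) =
      if p = q then p.natDegree * min a b else 0 := by
  rw [((homEquivPow p q a b hp hq hip hiq).restrictScalars K).finrank_eq]
  by_cases hpq : p = q
  · rw [if_pos hpq, if_pos hpq, finrank_quot _ (pow_ne_zero _ hp.ne_zero),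
      natDegree_pow, mul_comm]
  · rw [if_neg hpq, if_neg hpq, finrank_quot _ one_ne_zero, natDegree_one]

open Polynomial in
lemma fd_homQuot {K : Type*} [Field K] (p q : K[X]) (a b : ℕ) (hp : p.Monic) (hq : q.Monic)
    (hip : Irreducible p) (hiq : Irreducible q) :
    FiniteDimensional K ((K[X] ⧸ Ideal.span {p ^ a}) →ₗ[K[X]] (K[X] ⧸ Ideal.span {q ^ b})) := by
  classical
  have : FiniteDimensional K (K[X] ⧸ Ideal.span {if p = q then p ^ min a b else 1}) := by
    by_cases hpq : p = q
    · rw [if_pos hpq]; exact fd_quot _ (pow_ne_zero _ hp.ne_zero)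
    · rw [if_neg hpq]; exact fd_quot _ one_ne_zero
  exact Module.Finite.equiv ((homEquivPow p q a b hp hq hip hiq).restrictScalars K).symm

end Aux

open scoped Classical in
open Polynomial in
/-- If `K^n`, as a `K[x]`-module with `x` acting as `X`, is isomorphic to
`⨁ i, K[x]/(f i ^ e i)` with each `f i` monic irreducible and each `e i` positive, then
`dim Cent(X) = Σ_{(i,j) : f i = f j} deg (f i) * min (e i) (e j)`. -/
theorem finrank_centralizer_eq_sum
    (K : Type*) [Field K] (n : ℕ) (X : Matrix (Fin n) (Fin n) K)
    (I : Type*) [Fintype I] [DecidableEq I]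
    (f : I → Polynomial K) (e : I → ℕ)
    (hmonic : ∀ i, (f i).Monic) (hirr : ∀ i, Irreducible (f i)) (hpos : ∀ i, 0 < e i)
    (hiso : Nonempty ((Module.AEval' X.mulVecLin) ≃ₗ[Polynomial K]
      (⨁ i : I, Polynomial K ⧸ Ideal.span {f i ^ e i}))) :
    Module.finrank K (Subalgebra.centralizer K {X}) =
      ∑ i : I, ∑ j : I,
        if f i = f j then (f i).natDegree * min (e i) (e j) else 0 := by
  obtain ⟨eq⟩ := hiso
  haveI : ∀ i j : I, FiniteDimensional K
      ((K[X] ⧸ Ideal.span {f i ^ e i}) →ₗ[K[X]] (K[X] ⧸ Ideal.span {f j ^ e j})) :=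
    fun i j => fd_homQuot _ _ _ _ (hmonic i) (hmonic j) (hirr i) (hirr j)
  have h1 : Module.finrank K (Subalgebra.centralizer K ({X} : Set (Matrix (Fin n) (Fin n) K))) =
      Module.finrank K (Module.End K[X] (Module.AEval' X.mulVecLin)) :=
    (centralizerEquivEnd n X).finrank_eq
  rw [h1]
  rw [(endCongrS K eq).finrank_eq]
  rw [(endDirectSumEquiv K (fun i => K[X] ⧸ Ideal.span {f i ^ e i})).finrank_eq]
  rw [Module.finrank_pi_fintype K]
  refine Finset.sum_congr rfl fun i _ => ?_
  rw [Module.finrank_pi_fintype K]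
  refine Finset.sum_congr rfl fun j _ => ?_
  exact finrank_homQuot (f i) (f j) (e i) (e j) (hmonic i) (hmonic j) (hirr i) (hirr j)
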